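/- Let u₀ : [0,T] × ℝ^d → ℝ^d and Π : [0,T] × ℝ^d → ℝ^{d×d} be C¹ with Π(t,x) a projection matrix (Π² = Π) for all (t,x). Suppose W : [0,T] × ℝ^d → ℝ^d is C¹ and satisfies ∂ₜW + (u₀·∇)W = M W, where M W := (∂ₜΠ)W + ((u₀·∇)Π)W − Π (W·∇)u₀. If W(0,x) = Π(0,x)W(0,x) for all x, then W(t,x) = Π(t,x)W(t,x) for all (t,x) ∈ [0,T] × ℝ^d, provided the flow of u₀ is complete on [0,T]. -/

import Mathlib

open Set Finset

/-- Directional derivative decomposition for `f : ℝ × (Fin d → ℝ) → ℝ`. -/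
lemma stmt17_dir {d : ℕ} {f : ℝ × (Fin d → ℝ) → ℝ} (hf : ContDiff ℝ 1 f)
    (t : ℝ) (x v : Fin d → ℝ) :
    fderiv ℝ f (t, x) (1, v)
      = deriv (fun s => f (s, x)) t
        + ∑ j, v j * fderiv ℝ (fun y => f (t, y)) x (Pi.single j 1) := by
  have hfd : HasFDerivAt f (fderiv ℝ f (t, x)) (t, x) :=
    (hf.differentiable one_ne_zero (t, x)).hasFDerivAt
  have h1 : HasDerivAt (fun s => (s, x) : ℝ → ℝ × (Fin d → ℝ)) ((1 : ℝ), (0 : Fin d → ℝ)) t :=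
    (hasDerivAt_id t).prodMk (hasDerivAt_const t x)
  have ht : deriv (fun s => f (s, x)) t = fderiv ℝ f (t, x) (1, (0 : Fin d → ℝ)) :=
    (hfd.comp_hasDerivAt t h1).deriv
  have h2 : HasFDerivAt (fun y => (t, y) : (Fin d → ℝ) → ℝ × (Fin d → ℝ))
      (ContinuousLinearMap.inr ℝ ℝ (Fin d → ℝ)) x :=
    (hasFDerivAt_const t x).prodMk (hasFDerivAt_id x)
  have hx : ∀ u : Fin d → ℝ, fderiv ℝ (fun y => f (t, y)) x u = fderiv ℝ f (t, x) (0, u) := by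
    intro u
    have hc : HasFDerivAt (fun y => f (t, y))
        ((fderiv ℝ f (t, x)).comp (ContinuousLinearMap.inr ℝ ℝ (Fin d → ℝ))) x :=
      hfd.comp x h2
    rw [hc.fderiv]; rfl
  have hsum : ∑ j, v j * fderiv ℝ (fun y => f (t, y)) x (Pi.single j 1)
      = fderiv ℝ f (t, x) ((0 : ℝ), v) := by
    simp only [hx]
    have hterm : ∀ j : Fin d, v j * fderiv ℝ f (t, x) ((0:ℝ), Pi.single j 1)
        = fderiv ℝ f (t, x) ((0:ℝ), Pi.single j (v j)) := by
      intro j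
      rw [← smul_eq_mul, ← (fderiv ℝ f (t, x)).map_smul]
      congr 1
      rw [Prod.smul_mk, smul_zero]
      congr 1
      ext m
      by_cases h : m = j <;> simp [h, Pi.single_apply]
    rw [Finset.sum_congr rfl fun j _ => hterm j, ← map_sum]
    congr 1
    ext m
    · simp [Prod.fst_sum]
    · simp [Prod.snd_sum, Finset.univ_sum_single]
  rw [ht, hsum, ← map_add]
  congr 1
  simp

/-- Chain rule along a characteristic. -/
lemma stmt17_chain {d : ℕ} {f : ℝ × (Fin d → ℝ) → ℝ} (hf : ContDiff ℝ 1 f)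
    {γ : ℝ → Fin d → ℝ} {s : ℝ} {g : Fin d → ℝ} (hγ : HasDerivAt γ g s) :
    HasDerivAt (fun τ => f (τ, γ τ)) (fderiv ℝ f (s, γ s) (1, g)) s := by
  have h1 : HasDerivAt (fun τ => (τ, γ τ) : ℝ → ℝ × (Fin d → ℝ)) ((1 : ℝ), g) s :=
    (hasDerivAt_id s).prodMk hγ
  exact ((hf.differentiable one_ne_zero (s, γ s)).hasFDerivAt).comp_hasDerivAt s h1

/-- The key linear-algebra computation. -/
lemma stmt17_alg {d : ℕ} (p p' : Fin d → Fin d → ℝ) (w w' b : Fin d → ℝ)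
    (hproj : ∀ i k, ∑ l, p i l * p l k = p i k)
    (hproj' : ∀ i k, ∑ l, (p' i l * p l k + p i l * p' l k) = p' i k)
    (htr : ∀ i, w' i = (∑ k, p' i k * w k) - ∑ k, p i k * b k) :
    ∀ i, w' i - ∑ k, (p' i k * w k + p i k * w' k)
      = -∑ k, p' i k * (w k - ∑ l, p k l * w l) := by
  intro i
  have key2 : ∀ l, (∑ k, p i k * p' k l) = p' i l - ∑ k, p' i k * p k l := by
    intro l
    have h := hproj' i l
    rw [Finset.sum_add_distrib] at h
    linarith
  have key : (∑ k, p i k * w' k)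
      = ((∑ l, p' i l * w l) - ∑ l, (∑ k, p' i k * p k l) * w l) - ∑ l, p i l * b l := by
    have e1 : (∑ k, p i k * w' k)
        = (∑ k, ∑ l, p i k * (p' k l * w l)) - ∑ k, ∑ l, p i k * (p k l * b l) := by
      simp only [htr, mul_sub, Finset.mul_sum, Finset.sum_sub_distrib]
    have e2 : (∑ k, ∑ l, p i k * (p k l * b l)) = ∑ l, p i l * b l := by
      rw [Finset.sum_comm]
      refine Finset.sum_congr rfl fun l _ => ?_
      rw [show (∑ k, p i k * (p k l * b l)) = (∑ k, p i k * p k l) * b l by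
        rw [Finset.sum_mul]; exact Finset.sum_congr rfl fun k _ => by ring]
      rw [hproj]
    have e3 : (∑ k, ∑ l, p i k * (p' k l * w l))
        = (∑ l, p' i l * w l) - ∑ l, (∑ k, p' i k * p k l) * w l := by
      rw [Finset.sum_comm]
      rw [show (∑ l, ∑ k, p i k * (p' k l * w l))
          = ∑ l, (∑ k, p i k * p' k l) * w l by
        refine Finset.sum_congr rfl fun l _ => ?_
        rw [Finset.sum_mul]; exact Finset.sum_congr rfl fun k _ => by ring]
      rw [← Finset.sum_sub_distrib]
      refine Finset.sum_congr rfl fun l _ => ?_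
      rw [key2 l, sub_mul]
    rw [e1, e2, e3]
  rw [htr i, Finset.sum_add_distrib, key]
  have e4 : (∑ k, p' i k * (w k - ∑ l, p k l * w l))
      = (∑ k, p' i k * w k) - ∑ l, (∑ k, p' i k * p k l) * w l := by
    simp only [mul_sub, Finset.sum_sub_distrib]
    congr 1
    simp only [Finset.mul_sum]
    rw [Finset.sum_comm]
    refine Finset.sum_congr rfl fun l _ => ?_
    rw [Finset.sum_mul]
    exact Finset.sum_congr rfl fun k _ => by ring
  rw [e4]
  ring

/-- Conservation of the polarization condition `W = ΠW` along the transport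
equation `∂ₜW + (u₀·∇)W = MW`, where
`MW = (∂ₜΠ)W + ((u₀·∇)Π)W − Π(W·∇)u₀`, provided the flow of `u₀` is
complete on `[0,T]` (every point lies on a characteristic defined on `[0,T]`).
The projection matrix `Π(t,x)` is written `Pr`, entrywise. -/
theorem stmt_17 {d : ℕ} (T : ℝ) (hT : 0 ≤ T)
    (u₀ : ℝ → (Fin d → ℝ) → Fin d → ℝ)
    (hu₀ : ContDiff ℝ 1 (fun q : ℝ × (Fin d → ℝ) => u₀ q.1 q.2))
    (Pr : ℝ → (Fin d → ℝ) → Fin d → Fin d → ℝ)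
    (hPr : ContDiff ℝ 1 (fun q : ℝ × (Fin d → ℝ) => Pr q.1 q.2))
    (hproj : ∀ t x (i k : Fin d), ∑ l, Pr t x i l * Pr t x l k = Pr t x i k)
    (W : ℝ → (Fin d → ℝ) → Fin d → ℝ)
    (hW : ContDiff ℝ 1 (fun q : ℝ × (Fin d → ℝ) => W q.1 q.2))
    (htransport : ∀ t x (i : Fin d),
      deriv (fun s => W s x i) t
        + ∑ j, u₀ t x j * fderiv ℝ (fun y => W t y i) x (Pi.single j 1)
      = (∑ k, (deriv (fun s => Pr s x i k) t
            + ∑ j, u₀ t x j * fderiv ℝ (fun y => Pr t y i k) x (Pi.single j 1))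
              * W t x k)
        - ∑ k, Pr t x i k
            * ∑ j, W t x j * fderiv ℝ (fun y => u₀ t y k) x (Pi.single j 1))
    (hflow : ∀ t ∈ Set.Icc (0:ℝ) T, ∀ x : Fin d → ℝ,
      ∃ γ : ℝ → Fin d → ℝ, γ t = x ∧
        ∀ s ∈ Set.Icc (0:ℝ) T, HasDerivAt γ (u₀ s (γ s)) s)
    (hinit : ∀ x (i : Fin d), W 0 x i = ∑ k, Pr 0 x i k * W 0 x k) :
    ∀ t ∈ Set.Icc (0:ℝ) T, ∀ (x : Fin d → ℝ) (i : Fin d),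
      W t x i = ∑ k, Pr t x i k * W t x k := by
  intro t ht x
  obtain ⟨γ, hγt, hγ'⟩ := hflow t ht x
  have hWc : ∀ i : Fin d, ContDiff ℝ 1 (fun q : ℝ × (Fin d → ℝ) => W q.1 q.2 i) :=
    fun i => contDiff_pi.mp hW i
  have hPc : ∀ i k : Fin d, ContDiff ℝ 1 (fun q : ℝ × (Fin d → ℝ) => Pr q.1 q.2 i k) :=
    fun i k => contDiff_pi.mp (contDiff_pi.mp hPr i) k
  set w : Fin d → ℝ → ℝ := fun i s => W s (γ s) i with hwdef
  set p : Fin d → Fin d → ℝ → ℝ := fun i k s => Pr s (γ s) i k with hpdef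
  set w' : Fin d → ℝ → ℝ := fun i s =>
    fderiv ℝ (fun q : ℝ × (Fin d → ℝ) => W q.1 q.2 i) (s, γ s) (1, u₀ s (γ s)) with hw'def
  set p' : Fin d → Fin d → ℝ → ℝ := fun i k s =>
    fderiv ℝ (fun q : ℝ × (Fin d → ℝ) => Pr q.1 q.2 i k) (s, γ s) (1, u₀ s (γ s)) with hp'def
  set b : Fin d → ℝ → ℝ := fun k s =>
    ∑ j, w j s * fderiv ℝ (fun y => u₀ s y k) (γ s) (Pi.single j 1) with hbdef
  have hw : ∀ (i : Fin d) (s : ℝ), s ∈ Set.Icc (0:ℝ) T → HasDerivAt (w i) (w' i s) s :=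
    fun i s hs => stmt17_chain (hWc i) (hγ' s hs)
  have hp : ∀ (i k : Fin d) (s : ℝ), s ∈ Set.Icc (0:ℝ) T → HasDerivAt (p i k) (p' i k s) s :=
    fun i k s hs => stmt17_chain (hPc i k) (hγ' s hs)
  -- the transport relation evaluated along the characteristic
  have htr : ∀ (s : ℝ) (i : Fin d),
      w' i s = (∑ k, p' i k s * w k s) - ∑ k, p i k s * b k s := by
    intro s i
    have h1 := stmt17_dir (hWc i) s (γ s) (u₀ s (γ s))
    have h2 : ∀ k : Fin d, p' i k s = deriv (fun σ => Pr σ (γ s) i k) s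
        + ∑ j, u₀ s (γ s) j * fderiv ℝ (fun y => Pr s y i k) (γ s) (Pi.single j 1) :=
      fun k => stmt17_dir (hPc i k) s (γ s) (u₀ s (γ s))
    have h3 := htransport s (γ s) i
    calc w' i s = deriv (fun σ => W σ (γ s) i) s
          + ∑ j, u₀ s (γ s) j * fderiv ℝ (fun y => W s y i) (γ s) (Pi.single j 1) := h1
      _ = (∑ k, (deriv (fun σ => Pr σ (γ s) i k) s
            + ∑ j, u₀ s (γ s) j * fderiv ℝ (fun y => Pr s y i k) (γ s) (Pi.single j 1))
              * W s (γ s) k)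
          - ∑ k, Pr s (γ s) i k
              * ∑ j, W s (γ s) j * fderiv ℝ (fun y => u₀ s y k) (γ s) (Pi.single j 1) := h3
      _ = (∑ k, p' i k s * w k s) - ∑ k, p i k s * b k s := by
          simp only [← h2]
          rfl
  -- the projection identity differentiated along the characteristic
  have hproj' : ∀ (s : ℝ), s ∈ Set.Icc (0:ℝ) T → ∀ i k : Fin d,
      ∑ l, (p' i l s * p l k s + p i l s * p' l k s) = p' i k s := by
    intro s hs i k
    have hA : HasDerivAt (fun σ => ∑ l, p i l σ * p l k σ)
        (∑ l, (p' i l s * p l k s + p i l s * p' l k s)) s :=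
      HasDerivAt.fun_sum fun l _ => (hp i l s hs).mul (hp l k s hs)
    have hB : (fun σ => ∑ l, p i l σ * p l k σ) = fun σ => p i k σ :=
      funext fun σ => hproj σ (γ σ) i k
    rw [hB] at hA
    exact hA.unique (hp i k s hs)
  -- the polarization defect
  set Z : ℝ → Fin d → ℝ := fun s i => w i s - ∑ k, p i k s * w k s with hZdef
  set Z' : ℝ → Fin d → ℝ := fun s i => -∑ k, p' i k s * Z s k with hZ'def
  have hZd : ∀ s ∈ Set.Icc (0:ℝ) T, HasDerivAt Z (Z' s) s := by
    intro s hs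
    rw [hasDerivAt_pi]
    intro i
    have hcomp : HasDerivAt (fun σ => w i σ - ∑ k, p i k σ * w k σ)
        (w' i s - ∑ k, (p' i k s * w k s + p i k s * w' k s)) s :=
      (hw i s hs).sub (HasDerivAt.fun_sum fun k _ => (hp i k s hs).mul (hw k s hs))
    have halg := stmt17_alg (fun i k => p i k s) (fun i k => p' i k s)
        (fun k => w k s) (fun k => w' k s) (fun k => b k s)
        (fun i k => hproj s (γ s) i k) (hproj' s hs) (fun i => htr s i) i
    rw [halg] at hcomp
    exact hcomp
  -- continuity and boundedness of the coefficient matrix along the characteristic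
  have hγc : ContinuousOn γ (Set.Icc (0:ℝ) T) :=
    fun s hs => ((hγ' s hs).continuousAt).continuousWithinAt
  have hcc : ContinuousOn (fun s : ℝ => (s, γ s)) (Set.Icc (0:ℝ) T) :=
    continuousOn_id.prodMk hγc
  have hPder : ContinuousOn (fun s : ℝ => (fun i k => p' i k s : Fin d → Fin d → ℝ))
      (Set.Icc (0:ℝ) T) := by
    refine continuousOn_pi.mpr fun i => continuousOn_pi.mpr fun k => ?_
    have h1 : ContinuousOn
        (fun s : ℝ => fderiv ℝ (fun q : ℝ × (Fin d → ℝ) => Pr q.1 q.2 i k) (s, γ s))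
        (Set.Icc (0:ℝ) T) :=
      ((hPc i k).continuous_fderiv one_ne_zero).comp_continuousOn hcc
    have h2 : ContinuousOn (fun s : ℝ => ((1:ℝ), u₀ s (γ s))) (Set.Icc (0:ℝ) T) :=
      continuousOn_const.prodMk (hu₀.continuous.comp_continuousOn hcc)
    exact h1.clm_apply h2
  obtain ⟨C, hC⟩ := isCompact_Icc.exists_bound_of_continuousOn hPder
  set K := (d : ℝ) * max C 0 with hKdef
  have hK0 : (0:ℝ) ≤ K := mul_nonneg (Nat.cast_nonneg d) (le_max_right C 0)
  have hbd : ∀ s ∈ Set.Icc (0:ℝ) T, ∀ i k : Fin d, |p' i k s| ≤ max C 0 := by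
    intro s hs i k
    have h1 : |p' i k s| ≤ ‖(fun k => p' i k s : Fin d → ℝ)‖ := by
      simpa [Real.norm_eq_abs] using norm_le_pi_norm (fun k => p' i k s : Fin d → ℝ) k
    have h2 : ‖(fun k => p' i k s : Fin d → ℝ)‖
        ≤ ‖(fun i k => p' i k s : Fin d → Fin d → ℝ)‖ :=
      norm_le_pi_norm (fun i k => p' i k s : Fin d → Fin d → ℝ) i
    exact h1.trans (h2.trans ((hC s hs).trans (le_max_left C 0)))
  have hbound : ∀ s ∈ Set.Ico (0:ℝ) T, ‖Z' s‖ ≤ K * ‖Z s‖ + 0 := by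
    intro s hs
    rw [add_zero]
    refine pi_norm_le_iff_of_nonneg (mul_nonneg hK0 (norm_nonneg _)) |>.mpr fun i => ?_
    have : ‖Z' s i‖ = |∑ k, p' i k s * Z s k| := by
      simp [hZ'def, Real.norm_eq_abs, abs_neg]
    rw [this]
    calc |∑ k, p' i k s * Z s k| ≤ ∑ k, |p' i k s * Z s k| := Finset.abs_sum_le_sum_abs _ _
      _ ≤ ∑ _k : Fin d, max C 0 * ‖Z s‖ := by
          refine Finset.sum_le_sum fun k _ => ?_
          rw [abs_mul]
          have hk : |Z s k| ≤ ‖Z s‖ := by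
            simpa [Real.norm_eq_abs] using norm_le_pi_norm (Z s) k
          exact mul_le_mul (hbd s (Set.mem_Icc.mpr ⟨hs.1, le_of_lt hs.2⟩) i k) hk
            (abs_nonneg _) (le_max_right C 0)
      _ = K * ‖Z s‖ := by
          rw [Finset.sum_const, Finset.card_univ, Fintype.card_fin, nsmul_eq_mul, hKdef,
            mul_assoc]
  have hZ0 : ‖Z 0‖ ≤ 0 := by
    have : Z 0 = 0 := by
      funext i
      exact sub_eq_zero.mpr (hinit (γ 0) i)
    rw [this, norm_zero]
  have hZcont : ContinuousOn Z (Set.Icc (0:ℝ) T) :=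
    fun s hs => ((hZd s hs).continuousAt).continuousWithinAt
  have hgron := norm_le_gronwallBound_of_norm_deriv_right_le hZcont
    (fun s hs => (hZd s (Set.mem_Icc.mpr ⟨hs.1, le_of_lt hs.2⟩)).hasDerivWithinAt)
    hZ0 hbound t ht
  have hZt : Z t = 0 := by
    rw [gronwallBound_ε0_δ0] at hgron
    exact norm_le_zero_iff.mp hgron
  intro i
  have h := congrFun hZt i
  have h2 : W t (γ t) i - ∑ k, Pr t (γ t) i k * W t (γ t) k = 0 := h
  rw [hγt] at h2
  linarith
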